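/- Let G be a group and V a vector space over a field of characteristic zero, regarded as a trivial G-module. Let C^n(G,V)^G be the invariant homogeneous cochain complex, on which Σ_{n+1} acts by permuting the arguments of a cochain. Then the coboundary δ preserves the sign decomposition C^n(G,V)^G = sC^n(G,V)^G ⊕ rC^n(G,V)^G, the cohomology of the subcomplex rC^•(G,V)^G vanishes in every degree, and consequently the inclusion sC^•(G,V)^G ↪ C^•(G,V)^G induces an isomorphism on cohomology; that is, the group cohomology H^•(G,V) consists entirely of its alternating part. -/

import Mathlib

/-- `G`-invariance of a homogeneous cochain (the module `V` being a trivial module). -/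
def InvFull (G : Type*) [Group G] {V : Type*} [AddCommGroup V] {ℓ : ℕ}
    (f : (Fin ℓ → G) → V) : Prop :=
  ∀ (g : G) (x : Fin ℓ → G), f (fun i => g * x i) = f x

/-- The homogeneous coboundary `δ` on cochains. -/
noncomputable def dFull {G V : Type*} [AddCommGroup V] {ℓ : ℕ}
    (f : (Fin ℓ → G) → V) : (Fin (ℓ + 1) → G) → V :=
  fun x => ∑ i : Fin (ℓ + 1), ((-1 : ℤ) ^ (i : ℕ)) • f (fun j => x (i.succAbove j))

/-- The alternating projector `Alt = (1/ℓ!) Σ_{σ ∈ Σ_ℓ} sgn(σ) σ` on homogeneous cochains,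
where `Σ_ℓ` acts by permuting the arguments. -/
noncomputable def altCochain (F : Type*) [Field F] {G V : Type*} [AddCommGroup V]
    [Module F V] {ℓ : ℕ} (f : (Fin ℓ → G) → V) : (Fin ℓ → G) → V :=
  fun x => (Nat.factorial ℓ : F)⁻¹ •
    ∑ σ : Equiv.Perm (Fin ℓ), (((Equiv.Perm.sign σ : ℤ) : F)) • f (x ∘ σ)



open Finsupp Equiv Equiv.Perm

namespace GpAlt

/-- Decomposition of a permutation of `Fin (k+1)` as a pair (image of `i`, induced permutation
of the complement), using monotone complement identifications. -/
noncomputable def permD {k : ℕ} (i : Fin (k + 1)) :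
    Fin (k + 1) × Perm (Fin k) ≃ Perm (Fin (k + 1)) where
  toFun x := (i.cycleRange.trans
    ((Equiv.Perm.decomposeFin.symm (0, x.2)).trans x.1.cycleRange.symm : Perm (Fin (k+1))))
  invFun σ := (σ i, (Equiv.Perm.decomposeFin ((i.cycleRange.symm.trans σ).trans (σ i).cycleRange)).2)
  left_inv := by
    rintro ⟨j, τ⟩
    have h1 : (i.cycleRange.trans
        ((Equiv.Perm.decomposeFin.symm (0, τ)).trans j.cycleRange.symm) : Perm (Fin (k+1))) i = j := by
      simp
    ext
    · simpa using h1
    · simp only [h1]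
      have h2 : ((i.cycleRange.symm.trans (i.cycleRange.trans
          ((Equiv.Perm.decomposeFin.symm (0, τ)).trans j.cycleRange.symm))).trans j.cycleRange)
          = Equiv.Perm.decomposeFin.symm (0, τ) := by
        simp [← Equiv.trans_assoc]
        simp [Equiv.trans_assoc]
      rw [h2]
      simp
  right_inv := by
    intro σ
    have h0 : ((i.cycleRange.symm.trans σ).trans (σ i).cycleRange) 0 = 0 := by
      simp
    set ρ := ((i.cycleRange.symm.trans σ).trans (σ i).cycleRange) with hρ
    have hfst : (Equiv.Perm.decomposeFin ρ).1 = 0 := by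
      have := Equiv.Perm.decomposeFin_symm_apply_zero (Equiv.Perm.decomposeFin ρ).1
        (Equiv.Perm.decomposeFin ρ).2
      rw [Prod.mk.eta, Equiv.symm_apply_apply] at this
      rw [← this, h0]
    have : ((0 : Fin (k+1)), (Equiv.Perm.decomposeFin ρ).2) = Equiv.Perm.decomposeFin ρ := by
      rw [← hfst]
    simp only [this, Equiv.symm_apply_apply]
    rw [← hρ, this, Equiv.symm_apply_apply, hρ]
    simp [← Equiv.trans_assoc]
    simp [Equiv.trans_assoc]

lemma permD_apply_succAbove {k : ℕ} (i j : Fin (k + 1)) (τ : Perm (Fin k)) (m : Fin k) :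
    (permD i (j, τ)) (i.succAbove m) = j.succAbove (τ m) := by
  simp [permD]

lemma permD_apply_self {k : ℕ} (i j : Fin (k + 1)) (τ : Perm (Fin k)) :
    (permD i (j, τ)) i = j := by
  simp [permD]

lemma permD_sign {k : ℕ} (i j : Fin (k + 1)) (τ : Perm (Fin k)) :
    Perm.sign (permD i (j, τ)) = (-1) ^ (i : ℕ) * (-1) ^ (j : ℕ) * Perm.sign τ := by
  have : (permD i (j, τ) : Perm (Fin (k+1)))
      = (j.cycleRange)⁻¹ * (Equiv.Perm.decomposeFin.symm (0, τ)) * i.cycleRange := by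
    rfl
  rw [this]
  simp [mul_assoc, mul_comm, mul_left_comm]

variable (F : Type*) [Field F]

/-- chains: formal `F`-combinations of `k`-tuples in `X`. -/
abbrev Ch (k : ℕ) (X : Type*) : Type _ := (Fin k → X) →₀ F

noncomputable def mkL {M : Type*} [AddCommGroup M] [Module F M] {ι : Type*} (g : ι → M) :
    (ι →₀ F) →ₗ[F] M := Finsupp.lift M F ι g

@[simp] lemma mkL_single {M : Type*} [AddCommGroup M] [Module F M] {ι : Type*}
    (g : ι → M) (a : ι) (c : F) :
    mkL F g (Finsupp.single a c) = c • g a := by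
  rw [mkL, Finsupp.lift_apply]
  exact Finsupp.sum_single_index (zero_smul F _)

variable {X Y Z : Type*}

/-- simplicial boundary -/
noncomputable def bnd {k : ℕ} : Ch F (k + 1) X →ₗ[F] Ch F k X :=
  mkL F fun α => ∑ i : Fin (k + 1), ((-1 : F) ^ (i : ℕ)) • Finsupp.single (α ∘ i.succAbove) 1

/-- antisymmetrization -/
noncomputable def altc {k : ℕ} : Ch F k X →ₗ[F] Ch F k X :=
  mkL F fun α => (Nat.factorial k : F)⁻¹ •
    ∑ σ : Perm (Fin k), (((Perm.sign σ : ℤ) : F)) • Finsupp.single (α ∘ σ) 1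

/-- pushforward along a map of vertices -/
noncomputable def pushf {k : ℕ} (φ : X → Y) : Ch F k X →ₗ[F] Ch F k Y :=
  mkL F fun α => Finsupp.single (φ ∘ α) 1

/-- cone at a fixed vertex -/
noncomputable def conef {k : ℕ} (v : X) : Ch F k X →ₗ[F] Ch F (k + 1) X :=
  mkL F fun α => Finsupp.single (Fin.cons v α) 1

/-- homotopy operator determined by a universal chain `κ` -/
noncomputable def hmap {k : ℕ} (κ : Ch F (k + 1) (Fin k)) : Ch F k X →ₗ[F] Ch F (k + 1) X :=
  mkL F fun α => pushf F α κ

noncomputable def iota (k : ℕ) : Ch F k (Fin k) := Finsupp.single id 1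

@[simp] lemma pushf_single {k : ℕ} (φ : X → Y) (α : Fin k → X) (c : F) :
    pushf F φ (Finsupp.single α c) = Finsupp.single (φ ∘ α) c := by
  rw [pushf, mkL_single, Finsupp.smul_single, smul_eq_mul, mul_one]

@[simp] lemma conef_single {k : ℕ} (v : X) (α : Fin k → X) (c : F) :
    conef F v (Finsupp.single α c) = Finsupp.single (Fin.cons v α) c := by
  rw [conef, mkL_single, Finsupp.smul_single, smul_eq_mul, mul_one]

lemma bnd_single {k : ℕ} (α : Fin (k + 1) → X) (c : F) :
    bnd F (Finsupp.single α c) =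
      c • ∑ i : Fin (k + 1), ((-1 : F) ^ (i : ℕ)) • Finsupp.single (α ∘ i.succAbove) (1 : F) :=
  mkL_single F _ _ _

lemma altc_single' {k : ℕ} (α : Fin k → X) (c : F) :
    altc F (Finsupp.single α c) = c • ((Nat.factorial k : F)⁻¹ •
      ∑ σ : Perm (Fin k), (((Perm.sign σ : ℤ) : F)) • Finsupp.single (α ∘ σ) (1 : F)) :=
  mkL_single F _ _ _

lemma pushf_pushf {k : ℕ} (φ : X → Y) (ψ : Y → Z) (c : Ch F k X) :
    pushf F ψ (pushf F φ c) = pushf F (ψ ∘ φ) c := by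
  induction c using Finsupp.induction_linear with
  | zero => simp
  | add f g hf hg => simp [map_add, hf, hg]
  | single a b => simp [Function.comp_assoc]

lemma bnd_pushf {k : ℕ} (φ : X → Y) (c : Ch F (k + 1) X) :
    bnd F (pushf F φ c) = pushf F φ (bnd F c) := by
  induction c using Finsupp.induction_linear with
  | zero => simp
  | add f g hf hg => simp [map_add, hf, hg]
  | single a b =>
      rw [pushf_single, bnd_single, bnd_single, map_smul, map_sum]
      simp [Function.comp_assoc]

lemma altc_pushf {k : ℕ} (φ : X → Y) (c : Ch F k X) :
    altc F (pushf F φ c) = pushf F (φ) (altc F c) := by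
  induction c using Finsupp.induction_linear with
  | zero => simp
  | add f g hf hg => simp [map_add, hf, hg]
  | single a b =>
      rw [pushf_single, altc_single', altc_single', map_smul, map_smul, map_sum]
      simp [Function.comp_assoc]

lemma pushf_conef {k : ℕ} (φ : X → Y) (v : X) (c : Ch F k X) :
    pushf F φ (conef F v c) = conef F (φ v) (pushf F φ c) := by
  induction c using Finsupp.induction_linear with
  | zero => simp
  | add f g hf hg => simp [map_add, hf, hg]
  | single a b => simp [Fin.comp_cons]

@[simp] lemma hmap_single {k : ℕ} (κ : Ch F (k + 1) (Fin k)) (α : Fin k → X) (c : F) :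
    hmap F κ (Finsupp.single α c) = c • pushf F α κ := by
  rw [hmap, mkL_single]

lemma pushf_hmap {k : ℕ} (κ : Ch F (k + 1) (Fin k)) (φ : X → Y) (c : Ch F k X) :
    pushf F φ (hmap F κ c) = hmap F κ (pushf F φ c) := by
  induction c using Finsupp.induction_linear with
  | zero => simp
  | add f g hf hg => simp [map_add, hf, hg]
  | single a b => simp [map_smul, pushf_pushf]

@[simp] lemma hmap_zero {k : ℕ} : (hmap F (0 : Ch F (k + 1) (Fin k)) : Ch F k X →ₗ[F] _) = 0 := by
  apply Finsupp.lhom_ext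
  intro a b
  simp

lemma bnd_conef {k : ℕ} (v : X) (c : Ch F (k + 1) X) :
    bnd F (conef F v c) = c - conef F v (bnd F c) := by
  induction c using Finsupp.induction_linear with
  | zero => simp
  | add f g hf hg =>
      rw [map_add, map_add, hf, hg, map_add, map_add]; abel
  | single α b =>
      rw [conef_single, bnd_single, bnd_single, map_smul, map_sum]
      rw [Fin.sum_univ_succ]
      have h0 : (Fin.cons v α ∘ Fin.succAbove 0) = α := by
        funext m; simp [Fin.succAbove]
      have hs : ∀ j : Fin (k + 1),
          (Fin.cons v α ∘ Fin.succAbove j.succ) = Fin.cons v (α ∘ j.succAbove) := by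
        intro j; funext m
        refine Fin.cases ?_ (fun m => ?_) m
        · simp [Fin.succAbove_of_castSucc_lt, Fin.castSucc_zero, Fin.succ_pos]
        · simp [Fin.succ_succAbove_succ]
      simp only [h0, hs, Fin.val_succ, Fin.val_zero, pow_zero, one_smul, pow_succ,
        smul_add, map_smul, map_sum, conef_single, mul_neg_one, neg_smul,
        Finset.sum_neg_distrib, smul_neg, Finsupp.smul_single, smul_eq_mul, mul_one]
      abel

lemma val_succAbove {n : ℕ} (p : Fin (n + 1)) (i : Fin n) :
    ((p.succAbove i : Fin (n + 1)) : ℕ) = if (i : ℕ) < (p : ℕ) then (i : ℕ) else (i : ℕ) + 1 := by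
  rw [Fin.succAbove]
  split_ifs with h1 h2 h2 <;> simp_all [Fin.lt_def, Fin.ext_iff] <;> omega

-- Fin identity for the simplicial relation
lemma dd_fin {k : ℕ} (a : Fin (k + 2)) (b : Fin (k + 1)) (h : (a : ℕ) ≤ (b : ℕ)) (m : Fin k) :
    a.succAbove (b.succAbove m) =
      (b.succ).succAbove ((a.castLT (lt_of_le_of_lt h b.isLt)).succAbove m) := by
  apply Fin.ext
  rw [val_succAbove, val_succAbove, val_succAbove, val_succAbove]
  simp only [Fin.val_succ, Fin.coe_castLT]
  split_ifs <;> omega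

variable (F : Type*) [Field F] {X : Type*}

lemma bnd_bnd {k : ℕ} (c : Ch F (k + 2) X) : bnd F (bnd F c) = 0 := by
  induction c using Finsupp.induction_linear with
  | zero => simp
  | add f g hf hg => rw [map_add, map_add, hf, hg, add_zero]
  | single α b =>
      rw [bnd_single, map_smul, map_sum, smul_eq_zero]
      right
      have step1 : (∑ a : Fin (k + 2), bnd F
            (((-1 : F) ^ (a : ℕ)) • Finsupp.single (α ∘ a.succAbove) (1 : F)))
          = ∑ p : Fin (k+2) × Fin (k+1),
              ((-1 : F) ^ ((p.1 : ℕ) + (p.2 : ℕ))) •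
                Finsupp.single (α ∘ p.1.succAbove ∘ p.2.succAbove) (1 : F) := by
        rw [Fintype.sum_prod_type]
        apply Finset.sum_congr rfl
        intro a _
        rw [map_smul, bnd_single, smul_smul, mul_one, Finset.smul_sum]
        apply Finset.sum_congr rfl
        intro b _
        rw [smul_smul, ← pow_add, Function.comp_assoc]
      rw [step1]
      set S : Finset (Fin (k+2) × Fin (k+1)) :=
        Finset.univ.filter (fun p => (p.1 : ℕ) ≤ (p.2 : ℕ)) with hS
      rw [← Finset.sum_add_sum_compl S, add_eq_zero_iff_eq_neg, ← Finset.sum_neg_distrib]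
      apply Finset.sum_bij
        (i := fun (p : Fin (k+2) × Fin (k+1)) (hp : p ∈ S) =>
          ((p.2.succ : Fin (k+2)), p.1.castLT (by
            simp only [hS, Finset.mem_filter] at hp
            exact lt_of_le_of_lt hp.2 p.2.isLt)))
      · intro p hp
        simp only [hS, Finset.mem_filter, Finset.mem_compl, Finset.mem_univ, true_and] at hp ⊢
        simp only [Fin.val_succ, Fin.coe_castLT]
        omega
      · intro p hp q hq hpq
        simp only [Prod.mk.injEq] at hpq
        have h1 : p.2 = q.2 := Fin.succ_injective _ hpq.1
        have h2 : p.1 = q.1 := by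
          have := congrArg (Fin.val) hpq.2
          simp only [Fin.coe_castLT] at this
          exact Fin.ext this
        exact Prod.ext h2 h1
      · intro q hq
        simp only [hS, Finset.mem_filter, Finset.mem_compl, Finset.mem_univ, true_and,
          not_le] at hq
        have hq1 : q.1 ≠ 0 := by
          intro h
          rw [h] at hq
          simp at hq
        refine ⟨(q.2.castSucc, q.1.pred hq1), ?_, ?_⟩
        · simp only [hS, Finset.mem_filter, Finset.mem_univ, true_and, Fin.coe_castSucc,
            Fin.coe_pred]
          omega
        · apply Prod.ext
          · simp [Fin.succ_pred]
          · apply Fin.ext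
            simp
      · intro p hp
        simp only [hS, Finset.mem_filter, Finset.mem_univ, true_and] at hp
        have hfun : α ∘ p.1.succAbove ∘ p.2.succAbove
            = α ∘ (p.2.succ).succAbove ∘ ((p.1.castLT (lt_of_le_of_lt hp p.2.isLt)).succAbove) := by
          funext m
          exact congrArg α (dd_fin p.1 p.2 hp m)
        rw [hfun]
        have hv : ((p.2.succ : Fin (k+2)) : ℕ) + ((p.1.castLT (lt_of_le_of_lt hp p.2.isLt)) : ℕ)
            = ((p.1 : ℕ) + (p.2 : ℕ)) + 1 := by
          simp only [Fin.val_succ, Fin.coe_castLT]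
          omega
        rw [hv, pow_succ, mul_neg_one, neg_smul, neg_neg]

variable (F : Type*) [Field F] {X : Type*}

lemma permD_sign_cast {k : ℕ} (i j : Fin (k + 1)) (τ : Perm (Fin k)) :
    ((Perm.sign (permD i (j, τ)) : ℤ) : F)
      = (-1 : F) ^ (i : ℕ) * (-1 : F) ^ (j : ℕ) * ((Perm.sign τ : ℤ) : F) := by
  rw [permD_sign]
  push_cast
  ring

lemma bnd_altc [CharZero F] {k : ℕ} (c : Ch F (k + 1) X) :
    bnd F (altc F c) = altc F (bnd F c) := by
  induction c using Finsupp.induction_linear with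
  | zero => simp
  | add f g hf hg => rw [map_add, map_add, hf, hg, ← map_add, ← map_add]
  | single α b =>
      have hb : (Finsupp.single α b : Ch F (k+1) X) = b • Finsupp.single α 1 := by
        rw [Finsupp.smul_single, smul_eq_mul, mul_one]
      rw [hb, map_smul, map_smul, map_smul, map_smul]
      congr 1
      set T : Ch F k X := ∑ j : Fin (k+1), ∑ τ : Perm (Fin k),
        ((-1 : F) ^ (j : ℕ) * ((Perm.sign τ : ℤ) : F)) •
          Finsupp.single (α ∘ (j.succAbove ∘ τ)) (1 : F) with hT
      have stepA : bnd F (altc F (Finsupp.single α (1:F)))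
          = ((k+1).factorial : F)⁻¹ • ((k+1 : ℕ) • T) := by
        rw [altc_single', one_smul, map_smul, map_sum]
        congr 1
        have h1 : ∀ σ : Perm (Fin (k+1)),
            bnd F ((((Perm.sign σ : ℤ) : F)) • Finsupp.single (α ∘ σ) (1:F))
            = ∑ a : Fin (k+1), (((Perm.sign σ : ℤ) : F) * (-1:F)^(a:ℕ)) •
                Finsupp.single (α ∘ (σ ∘ a.succAbove)) (1:F) := by
          intro σ
          rw [map_smul, bnd_single, one_smul, Finset.smul_sum]
          apply Finset.sum_congr rfl
          intro a _
          rw [smul_smul, Function.comp_assoc]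
        rw [Finset.sum_congr rfl (fun σ _ => h1 σ), Finset.sum_comm]
        have h2 : ∀ a : Fin (k+1),
            (∑ σ : Perm (Fin (k+1)), (((Perm.sign σ : ℤ) : F) * (-1:F)^(a:ℕ)) •
                Finsupp.single (α ∘ (σ ∘ a.succAbove)) (1:F)) = T := by
          intro a
          rw [← Equiv.sum_comp (permD a), Fintype.sum_prod_type, hT]
          apply Finset.sum_congr rfl
          intro j _
          apply Finset.sum_congr rfl
          intro τ _
          have hcomp : (⇑(permD a (j, τ)) ∘ a.succAbove) = j.succAbove ∘ ⇑τ := by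
            funext m
            exact permD_apply_succAbove a j τ m
          rw [hcomp, permD_sign_cast]
          congr 1
          have hsq : (-1:F)^(a:ℕ) * (-1:F)^(a:ℕ) = 1 := by
            rw [← mul_pow]; norm_num
          calc (-1:F) ^ (a:ℕ) * (-1:F) ^ (j:ℕ) * ((Perm.sign τ : ℤ) : F) * (-1:F)^(a:ℕ)
              = ((-1:F)^(a:ℕ) * (-1:F)^(a:ℕ)) * ((-1:F) ^ (j:ℕ) * ((Perm.sign τ : ℤ) : F)) := by
                ring
            _ = (-1:F) ^ (j:ℕ) * ((Perm.sign τ : ℤ) : F) := by rw [hsq, one_mul]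
        rw [Finset.sum_congr rfl (fun a _ => h2 a), Finset.sum_const, Finset.card_univ,
          Fintype.card_fin]
      have stepB : altc F (bnd F (Finsupp.single α (1:F)))
          = (k.factorial : F)⁻¹ • T := by
        rw [bnd_single, one_smul, map_sum]
        have h3 : ∀ j : Fin (k+1),
            altc F (((-1:F)^(j:ℕ)) • Finsupp.single (α ∘ j.succAbove) (1:F))
            = (k.factorial : F)⁻¹ • ∑ τ : Perm (Fin k),
                ((-1 : F) ^ (j : ℕ) * ((Perm.sign τ : ℤ) : F)) •
                  Finsupp.single (α ∘ (j.succAbove ∘ τ)) (1 : F) := by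
          intro j
          rw [map_smul, altc_single', one_smul, smul_comm]
          congr 1
          rw [Finset.smul_sum]
          apply Finset.sum_congr rfl
          intro τ _
          rw [smul_smul, Function.comp_assoc]
        rw [Finset.sum_congr rfl (fun j _ => h3 j), ← Finset.smul_sum, hT]
      rw [stepA, stepB]
      rw [Nat.cast_smul_eq_nsmul F (k+1) T |>.symm] at *
      rw [smul_smul]
      congr 1
      have hk : (k.factorial : F) ≠ 0 := Nat.cast_ne_zero.mpr k.factorial_ne_zero
      have hk1 : ((k+1 : ℕ) : F) ≠ 0 := Nat.cast_ne_zero.mpr (Nat.succ_ne_zero k)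
      have hfact : (((k+1).factorial : ℕ) : F) = ((k+1 : ℕ) : F) * (k.factorial : F) := by
        rw [Nat.factorial_succ]
        push_cast
        ring
      rw [hfact]
      field_simp

variable (F : Type*) [Field F] {X : Type*}

lemma altc_one (c : Ch F 1 X) : altc F c = c := by
  induction c using Finsupp.induction_linear with
  | zero => simp
  | add f g hf hg => rw [map_add, hf, hg]
  | single α b =>
      rw [altc_single']
      have h1 : ∀ σ : Perm (Fin 1),
          (((Perm.sign σ : ℤ) : F)) • Finsupp.single (α ∘ σ) (1:F) = Finsupp.single α 1 := by
        intro σ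
        have hσ : σ = 1 := Equiv.ext fun x => Subsingleton.elim _ _
        subst hσ
        simp
      rw [Finset.sum_congr rfl (fun σ _ => h1 σ), Finset.sum_const, Finset.card_univ]
      have hcard : Fintype.card (Perm (Fin 1)) = 1 :=
        Fintype.card_eq_one_iff.mpr ⟨1, fun σ => Equiv.ext fun x => Subsingleton.elim _ _⟩
      rw [hcard]
      simp [Finsupp.smul_single]

/-- the universal homotopy chain -/
noncomputable def kappa : (ℓ : ℕ) → Ch F (ℓ + 1) (Fin ℓ)
  | 0 => 0
  | (m + 1) => conef F (0 : Fin (m + 1)) (iota F (m + 1) - altc F (iota F (m + 1))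
      - hmap F (kappa m) (bnd F (iota F (m + 1))))

lemma homotopy_of (m : ℕ)
    (hk : bnd F (kappa F (m + 1)) = iota F (m + 1) - altc F (iota F (m + 1))
      - hmap F (kappa F m) (bnd F (iota F (m + 1))))
    {X : Type*} (c : Ch F (m + 1) X) :
    bnd F (hmap F (kappa F (m + 1)) c) + hmap F (kappa F m) (bnd F c) = c - altc F c := by
  induction c using Finsupp.induction_linear with
  | zero => simp
  | add f g hf hg =>
      simp only [map_add]
      calc bnd F (hmap F (kappa F (m+1)) f) + bnd F (hmap F (kappa F (m+1)) g)
            + (hmap F (kappa F m) (bnd F f) + hmap F (kappa F m) (bnd F g))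
          = (bnd F (hmap F (kappa F (m+1)) f) + hmap F (kappa F m) (bnd F f))
            + (bnd F (hmap F (kappa F (m+1)) g) + hmap F (kappa F m) (bnd F g)) := by abel
        _ = (f - altc F f) + (g - altc F g) := by rw [hf, hg]
        _ = f + g - (altc F f + altc F g) := by abel
  | single α b =>
      have hb : (Finsupp.single α b : Ch F (m+1) X) = b • Finsupp.single α 1 := by
        rw [Finsupp.smul_single, smul_eq_mul, mul_one]
      rw [hb]
      simp only [map_smul]
      rw [← smul_add, ← smul_sub]
      congr 1
      rw [hmap_single, one_smul, bnd_pushf, hk, map_sub, map_sub]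
      have hι : pushf F α (iota F (m+1)) = Finsupp.single α 1 := by
        rw [iota, pushf_single, Function.comp_id]
      rw [← altc_pushf, pushf_hmap, ← bnd_pushf, hι]
      abel

lemma bnd_kappa [CharZero F] (m : ℕ) :
    bnd F (kappa F (m + 1)) = iota F (m + 1) - altc F (iota F (m + 1))
      - hmap F (kappa F m) (bnd F (iota F (m + 1))) := by
  induction m with
  | zero =>
      have hz : iota F 1 - altc F (iota F 1)
          - hmap F (kappa F 0) (bnd F (iota F 1)) = 0 := by
        rw [altc_one, show kappa F 0 = 0 from rfl, hmap_zero]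
        simp
      rw [show kappa F 1 = conef F (0 : Fin 1) (iota F 1 - altc F (iota F 1)
        - hmap F (kappa F 0) (bnd F (iota F 1))) from rfl, hz, map_zero, map_zero]
  | succ m IH =>
      have hom := homotopy_of F m IH (X := Fin (m + 2)) (bnd F (iota F (m + 2)))
      rw [show kappa F (m + 2) = conef F (0 : Fin (m + 2)) (iota F (m + 2)
        - altc F (iota F (m + 2))
        - hmap F (kappa F (m + 1)) (bnd F (iota F (m + 2)))) from rfl]
      rw [bnd_conef]
      have hbz : bnd F (iota F (m + 2) - altc F (iota F (m + 2))
          - hmap F (kappa F (m + 1)) (bnd F (iota F (m + 2)))) = 0 := by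
        rw [map_sub, map_sub, bnd_altc, eq_sub_of_add_eq hom, bnd_bnd, map_zero]
        abel
      rw [hbz, map_zero, sub_zero]

/-- The chain homotopy identity, for chains on an arbitrary vertex type. -/
lemma homotopy [CharZero F] (m : ℕ) {X : Type*} (c : Ch F (m + 1) X) :
    bnd F (hmap F (kappa F (m + 1)) c) + hmap F (kappa F m) (bnd F c) = c - altc F c :=
  homotopy_of F m (bnd_kappa F m) c

variable (F : Type*) [Field F] {G V : Type*} [AddCommGroup V] [Module F V]

lemma neg_pow_cast_smul (i : ℕ) (v : V) : ((-1 : F) ^ i) • v = ((-1 : ℤ) ^ i) • v := by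
  have h : (((-1 : ℤ) ^ i : ℤ) : F) = (-1 : F) ^ i := by push_cast; ring
  rw [← h, Int.cast_smul_eq_zsmul]

/-- pairing of a cochain against a chain -/
noncomputable def pairc {k : ℕ} (f : (Fin k → G) → V) : Ch F k G →ₗ[F] V := mkL F f

@[simp] lemma pairc_single {k : ℕ} (f : (Fin k → G) → V) (x : Fin k → G) (c : F) :
    pairc F f (Finsupp.single x c) = c • f x := mkL_single F _ _ _

lemma pairc_bnd {k : ℕ} (f : (Fin k → G) → V) (c : Ch F (k + 1) G) :
    pairc F f (bnd F c) = pairc F (dFull f) c := by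
  induction c using Finsupp.induction_linear with
  | zero => simp
  | add a b ha hb => simp [map_add, ha, hb]
  | single x b =>
      rw [bnd_single, map_smul, map_sum, pairc_single]
      congr 1
      rw [dFull]
      apply Finset.sum_congr rfl
      intro i _
      rw [map_smul, pairc_single, one_smul, neg_pow_cast_smul]
      rfl

lemma pairc_altc {k : ℕ} (f : (Fin k → G) → V) (c : Ch F k G) :
    pairc F f (altc F c) = pairc F (altCochain F f) c := by
  induction c using Finsupp.induction_linear with
  | zero => simp
  | add a b ha hb => simp [map_add, ha, hb]
  | single x b =>
      rw [altc_single', map_smul, map_smul, map_sum, pairc_single]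
      congr 1
      rw [altCochain]
      congr 1
      apply Finset.sum_congr rfl
      intro σ _
      rw [map_smul, pairc_single, one_smul]

/-- the natural homotopy operator on cochains -/
noncomputable def Kmap (ℓ : ℕ) (f : (Fin (ℓ + 1) → G) → V) : (Fin ℓ → G) → V :=
  fun x => pairc F f (pushf F x (kappa F ℓ))

lemma Kmap_zero (ℓ : ℕ) : Kmap F ℓ (0 : (Fin (ℓ + 1) → G) → V) = 0 := by
  funext x
  have : pairc F (0 : (Fin (ℓ + 1) → G) → V) = 0 := by
    apply Finsupp.lhom_ext
    intro a b
    simp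
  rw [Kmap, this]
  rfl

lemma Kmap_inv [Group G] (ℓ : ℕ) (f : (Fin (ℓ + 1) → G) → V) (hf : InvFull G f) :
    InvFull G (Kmap F ℓ f) := by
  intro g x
  rw [Kmap, Kmap]
  have key : ∀ c : Ch F (ℓ + 1) (Fin ℓ),
      pairc F f (pushf F (fun i => g * x i) c) = pairc F f (pushf F x c) := by
    intro c
    induction c using Finsupp.induction_linear with
    | zero => simp
    | add a b ha hb => simp [map_add, ha, hb]
    | single α b =>
        rw [pushf_single, pushf_single, pairc_single, pairc_single]
        congr 1
        exact hf g (x ∘ α)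
  exact key _

/-- the cochain homotopy identity -/
lemma cochain_homotopy [CharZero F] (m : ℕ) (f : (Fin (m + 2) → G) → V)
    (x : Fin (m + 2) → G) :
    dFull (Kmap F (m + 1) f) x + Kmap F (m + 2) (dFull f) x
      = f x - altCochain F f x := by
  have hA : dFull (Kmap F (m + 1) f) x
      = pairc F f (hmap F (kappa F (m + 1)) (bnd F (Finsupp.single x (1 : F)))) := by
    rw [bnd_single, one_smul, map_sum, map_sum, dFull]
    apply Finset.sum_congr rfl
    intro i _
    rw [map_smul, map_smul, hmap_single, one_smul, neg_pow_cast_smul]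
    rfl
  have hB : Kmap F (m + 2) (dFull f) x
      = pairc F f (bnd F (hmap F (kappa F (m + 2)) (Finsupp.single x (1 : F)))) := by
    rw [Kmap, ← pairc_bnd, hmap_single, one_smul]
  have hkey := homotopy F (m + 1) (Finsupp.single x (1:F)) (X := G)
  rw [hA, hB, add_comm, ← map_add, congrArg (pairc F f) hkey, map_sub, pairc_single, one_smul,
    pairc_altc, pairc_single, one_smul]

variable (F : Type*) [Field F] {G V : Type*} [AddCommGroup V] [Module F V]

lemma alt_dFull [CharZero F] {k : ℕ} (f : (Fin (k + 1) → G) → V) :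
    altCochain F (dFull f) = dFull (altCochain F f) := by
  funext x
  have e1 : ∀ {m : ℕ} (g : (Fin m → G) → V) (y : Fin m → G),
      altCochain F g y = pairc F g (altc F (Finsupp.single y (1 : F))) := by
    intro m g y
    rw [pairc_altc, pairc_single, one_smul]
  have e2 : dFull (altCochain F f) x = pairc F f (altc F (bnd F (Finsupp.single x (1:F)))) := by
    rw [dFull, bnd_single, one_smul, map_sum, map_sum]
    apply Finset.sum_congr rfl
    intro i _
    rw [map_smul, map_smul, ← e1, ← neg_pow_cast_smul F]
    rfl
  rw [e2, e1, ← pairc_bnd, bnd_altc]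

lemma alt_perm {k : ℕ} (f : (Fin k → G) → V) (x : Fin k → G) (σ : Perm (Fin k)) :
    altCochain F f (x ∘ σ) = ((Perm.sign σ : ℤ) : F) • altCochain F f x := by
  rw [altCochain, altCochain, smul_comm]
  congr 1
  calc ∑ τ : Perm (Fin k), ((Perm.sign τ : ℤ) : F) • f ((x ∘ ⇑σ) ∘ ⇑τ)
      = ∑ ρ : Perm (Fin k), ((Perm.sign (σ⁻¹ * ρ) : ℤ) : F) • f (x ∘ ⇑ρ) := by
        apply Fintype.sum_equiv (Equiv.mulLeft σ)
        intro τ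
        simp only [Equiv.coe_mulLeft]
        have h1 : σ⁻¹ * (σ * τ) = τ := by group
        rw [h1, Perm.coe_mul, ← Function.comp_assoc]
    _ = ((Perm.sign σ : ℤ) : F) • ∑ ρ : Perm (Fin k), ((Perm.sign ρ : ℤ) : F) • f (x ∘ ⇑ρ) := by
        rw [Finset.smul_sum]
        apply Finset.sum_congr rfl
        intro ρ _
        rw [smul_smul]
        congr 1
        rw [map_mul, Equiv.Perm.sign_inv, Units.val_mul, Int.cast_mul]

lemma alt_idem [CharZero F] {k : ℕ} (f : (Fin k → G) → V) :
    altCochain F (altCochain F f) = altCochain F f := by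
  funext x
  rw [altCochain]
  have step : ∀ σ : Perm (Fin k),
      ((Perm.sign σ : ℤ) : F) • altCochain F f (x ∘ σ) = altCochain F f x := by
    intro σ
    rw [alt_perm, smul_smul]
    have : ((Perm.sign σ : ℤ) : F) * ((Perm.sign σ : ℤ) : F) = 1 := by
      rw [← Int.cast_mul, ← Units.val_mul, Int.units_mul_self, Units.val_one, Int.cast_one]
    rw [this, one_smul]
  rw [Finset.sum_congr rfl (fun σ _ => step σ), Finset.sum_const, Finset.card_univ,
    Fintype.card_perm, Fintype.card_fin, ← Nat.cast_smul_eq_nsmul F, smul_smul,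
    inv_mul_cancel₀ (Nat.cast_ne_zero.mpr k.factorial_ne_zero : (k.factorial : F) ≠ 0), one_smul]

lemma alt_one_cochain (f : (Fin 1 → G) → V) : altCochain F f = f := by
  funext x
  rw [altCochain]
  have h1 : ∀ σ : Perm (Fin 1), ((Perm.sign σ : ℤ) : F) • f (x ∘ σ) = f x := by
    intro σ
    have hσ : σ = 1 := Equiv.ext fun y => Subsingleton.elim _ _
    subst hσ
    simp
  rw [Finset.sum_congr rfl (fun σ _ => h1 σ), Finset.sum_const, Finset.card_univ]
  have hcard : Fintype.card (Perm (Fin 1)) = 1 :=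
    Fintype.card_eq_one_iff.mpr ⟨1, fun σ => Equiv.ext fun y => Subsingleton.elim _ _⟩
  rw [hcard]
  simp

lemma dFull_zero {ℓ : ℕ} : dFull (0 : (Fin ℓ → G) → V) = 0 := by
  funext x; simp [dFull]

lemma dFull_sub {ℓ : ℕ} (f g : (Fin ℓ → G) → V) :
    dFull (f - g) = dFull f - dFull g := by
  funext x
  simp [dFull, smul_sub, Finset.sum_sub_distrib]

lemma alt_zero {ℓ : ℕ} : altCochain F (0 : (Fin ℓ → G) → V) = 0 := by
  funext x; simp [altCochain]

lemma alt_sub {ℓ : ℕ} (f g : (Fin ℓ → G) → V) :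
    altCochain F (f - g) = altCochain F f - altCochain F g := by
  funext x
  simp [altCochain, smul_sub, Finset.sum_sub_distrib, Finset.smul_sum]

variable [Group G]

lemma inv_sub {ℓ : ℕ} {f g : (Fin ℓ → G) → V} (hf : InvFull G f) (hg : InvFull G g) :
    InvFull G (f - g) := by
  intro a x
  simp only [Pi.sub_apply]
  rw [hf a x, hg a x]

lemma alt_inv {ℓ : ℕ} {f : (Fin ℓ → G) → V} (hf : InvFull G f) :
    InvFull G (altCochain F f) := by
  intro a x
  rw [altCochain, altCochain]
  congr 1
  apply Finset.sum_congr rfl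
  intro σ _
  congr 1
  exact hf a (x ∘ σ)

lemma rAcyclic [CharZero F] (n : ℕ) (f : (Fin (n + 2) → G) → V)
    (h1 : InvFull G f) (h2 : altCochain F f = 0) (h3 : dFull f = 0) :
    ∃ w : (Fin (n + 1) → G) → V, InvFull G w ∧ altCochain F w = 0 ∧ f = dFull w := by
  have hd : dFull (Kmap F (n + 1) f) = f := by
    funext x
    have hh := cochain_homotopy F n f x
    rw [h3, Kmap_zero, h2] at hh
    simpa using hh
  refine ⟨Kmap F (n + 1) f - altCochain F (Kmap F (n + 1) f),
    inv_sub (Kmap_inv F (n + 1) f h1) (alt_inv F (Kmap_inv F (n + 1) f h1)), ?_, ?_⟩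
  · rw [alt_sub, alt_idem, sub_self]
  · rw [dFull_sub, hd, ← alt_dFull, hd, h2, sub_zero]

end GpAlt

open GpAlt

/-- For a group `G` and a vector space `V` over a field of characteristic zero, the
coboundary on invariant homogeneous cochains preserves the sign decomposition, the
cohomology of the complementary subcomplex `rC^•(G,V)^G` vanishes in every degree, and the
inclusion of the alternating subcomplex `sC^•(G,V)^G` induces an isomorphism on cohomology:
group cohomology consists entirely of its alternating part. -/
theorem group_cohomology_is_alternating
    (F : Type*) [Field F] [CharZero F] (G : Type*) [Group G]
    (V : Type*) [AddCommGroup V] [Module F V] :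
    -- δ preserves the sign decomposition (on the invariant subcomplex)
    (∀ (ℓ : ℕ) (f : (Fin (ℓ + 1) → G) → V), InvFull G f →
      (altCochain F f = f → altCochain F (dFull f) = dFull f) ∧
      (altCochain F f = 0 → altCochain F (dFull f) = 0)) ∧
    -- H^0 of the r-part vanishes
    (∀ f : (Fin 1 → G) → V, InvFull G f → altCochain F f = 0 → dFull f = 0 → f = 0) ∧
    -- H^{n+1} of the r-part vanishes
    (∀ (n : ℕ) (f : (Fin (n + 2) → G) → V), InvFull G f → altCochain F f = 0 →
      dFull f = 0 →
      ∃ w : (Fin (n + 1) → G) → V, InvFull G w ∧ altCochain F w = 0 ∧ f = dFull w) ∧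
    -- the inclusion of the s-part is bijective on H^0
    (∀ f : (Fin 1 → G) → V, InvFull G f → dFull f = 0 → altCochain F f = f) ∧
    -- the inclusion of the s-part is surjective on H^{n+1}
    (∀ (n : ℕ) (f : (Fin (n + 2) → G) → V), InvFull G f → dFull f = 0 →
      ∃ u : (Fin (n + 2) → G) → V, InvFull G u ∧ altCochain F u = u ∧ dFull u = 0 ∧
        ∃ w : (Fin (n + 1) → G) → V, InvFull G w ∧ f = u + dFull w) ∧
    -- the inclusion of the s-part is injective on H^{n+1}
    (∀ (n : ℕ) (u : (Fin (n + 2) → G) → V), InvFull G u → altCochain F u = u →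
      dFull u = 0 → (∃ w : (Fin (n + 1) → G) → V, InvFull G w ∧ u = dFull w) →
      ∃ ws : (Fin (n + 1) → G) → V,
        InvFull G ws ∧ altCochain F ws = ws ∧ u = dFull ws) := by
  refine ⟨?_, ?_, ?_, ?_, ?_, ?_⟩
  · -- δ preserves the sign decomposition
    intro ℓ f _
    constructor
    · intro h
      rw [alt_dFull, h]
    · intro h
      rw [alt_dFull, h, dFull_zero]
  · -- H^0 of the r-part vanishes
    intro f _ h2 _
    rw [← alt_one_cochain F f, h2]
  · -- H^{n+1} of the r-part vanishes
    intro n f h1 h2 h3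
    exact rAcyclic F n f h1 h2 h3
  · -- s-part bijective on H^0
    intro f _ _
    exact alt_one_cochain F f
  · -- s-part surjective on H^{n+1}
    intro n f h1 hd
    refine ⟨altCochain F f, alt_inv F h1, alt_idem F f, ?_, ?_⟩
    · rw [← alt_dFull, hd, alt_zero]
    · have hdu : dFull (altCochain F f) = 0 := by rw [← alt_dFull, hd, alt_zero]
      obtain ⟨w, hw1, _, hw3⟩ := rAcyclic F n (f - altCochain F f)
        (inv_sub h1 (alt_inv F h1))
        (by rw [alt_sub, alt_idem, sub_self])
        (by rw [dFull_sub, hd, hdu, sub_zero])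
      refine ⟨w, hw1, ?_⟩
      funext x
      have := congrFun hw3 x
      rw [Pi.sub_apply] at this
      rw [Pi.add_apply]
      exact sub_eq_iff_eq_add'.mp this
  · -- s-part injective on H^{n+1}
    intro n u _ halt _ ⟨w, hw1, hw2⟩
    refine ⟨altCochain F w, alt_inv F hw1, alt_idem F w, ?_⟩
    rw [← alt_dFull, ← hw2]
    exact halt.symm
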